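/- Let G be a finite simple graph with vertex set V, with nonnegative real edge weights λ_{uv} > 0 on its edges and complex vertex variables x_v, and fix a root vertex i ∈ V. Let T = T^i_G be the rooted tree of paths of G at i: its vertices are the paths of G starting at i (including the trivial path at i), two paths being adjacent in T exactly when one is obtained from the other by appending one edge; the vertex variable of a path P in T is x_{end(P)} where end(P) is the last vertex of P, and the edge weight between a path P and its one-edge extension P·{u,v} is λ_{uv}. Then μ(G) · μ(T ∖ r) = μ(T) · μ(G ∖ i), where r is the root of T (the trivial path at i), μ denotes the matching polynomial, and G ∖ i (resp. T ∖ r) denotes the graph obtained by deleting the vertex i (resp. r). Equivalently, whenever the denominators are nonzero, μ(G)/μ(G∖i) = μ(T)/μ(T∖r). -/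

import Mathlib

open Finset Classical

/-- A matching of the finite simple graph `G` restricted to the vertex set `S`:
a finset of edges of `G`, all of whose endpoints lie in `S`, no two edges
sharing a vertex. -/
def IsGMatching {V : Type} [Fintype V] [DecidableEq V] (G : SimpleGraph V)
    (S : Finset V) (M : Finset (Sym2 V)) : Prop :=
  (∀ e ∈ M, e ∈ G.edgeSet ∧ ∀ v ∈ e, v ∈ S) ∧
  ∀ e ∈ M, ∀ f ∈ M, e ≠ f → ∀ v ∈ e, v ∉ f

/-- The matching polynomial of the finite simple graph `G` restricted to the
vertex set `S`, with edge weights `w : Sym2 V → ℝ` and vertex variables `x`: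
`μ = Σ_{M matching} (Π_{v ∈ S not covered by M} x v) · (Π_{e ∈ M} w e)`. -/
noncomputable def muG {V : Type} [Fintype V] [DecidableEq V] (G : SimpleGraph V)
    (w : Sym2 V → ℝ) (x : V → ℂ) (S : Finset V) : ℂ :=
  ∑ M ∈ univ.filter (fun M : Finset (Sym2 V) => IsGMatching G S M),
    (∏ v ∈ S.filter (fun v => ∀ e ∈ M, v ∉ e), x v) * ∏ e ∈ M, (w e : ℂ)

variable {V : Type} [Fintype V] [DecidableEq V]

lemma isGMatching_empty_iff (G : SimpleGraph V) (M : Finset (Sym2 V)) :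
    IsGMatching G ∅ M ↔ M = ∅ := by
  constructor
  · rintro ⟨h1, -⟩
    by_contra hne
    obtain ⟨e, he⟩ := Finset.nonempty_iff_ne_empty.2 hne
    obtain ⟨hG, hS⟩ := h1 e he
    induction e with
    | h u v => exact absurd (hS u (by simp)) (by simp)
  · rintro rfl; exact ⟨by simp, by simp⟩

lemma muG_empty (G : SimpleGraph V) (w : Sym2 V → ℝ) (x : V → ℂ) :
    muG G w x ∅ = 1 := by
  unfold muG
  rw [Finset.sum_eq_single (∅ : Finset (Sym2 V))]
  · simp
  · intro M hM hne
    simp only [mem_filter, isGMatching_empty_iff] at hM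
    exact absurd hM.2 hne
  · intro h
    simp only [mem_filter, isGMatching_empty_iff] at h
    simp at h

lemma isGMatching_mono (G : SimpleGraph V) {S T : Finset V} (hST : S ⊆ T)
    {M : Finset (Sym2 V)} (h : IsGMatching G S M) : IsGMatching G T M :=
  ⟨fun e he => ⟨(h.1 e he).1, fun v hv => hST ((h.1 e he).2 v hv)⟩, h.2⟩

lemma muG_rec (G : SimpleGraph V) (w : Sym2 V → ℝ) (x : V → ℂ)
    {S : Finset V} {i : V} [DecidablePred (fun j => G.Adj i j)] (hi : i ∈ S) :
    muG G w x S = x i * muG G w x (S.erase i) +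
      ∑ j ∈ (S.erase i).filter (fun j => G.Adj i j),
        (w s(i, j) : ℂ) * muG G w x ((S.erase i).erase j) := by
  classical
  unfold muG
  rw [← Finset.sum_filter_add_sum_filter_not
    (univ.filter (fun M : Finset (Sym2 V) => IsGMatching G S M))
    (fun M => ∀ e ∈ M, i ∉ e)]
  congr 1
  · -- part A : matchings avoiding i
    rw [Finset.mul_sum]
    rw [Finset.filter_filter]
    apply Finset.sum_congr
    · apply Finset.filter_congr
      intro M _
      constructor
      · rintro ⟨⟨h1, h2⟩, h3⟩
        refine ⟨fun e he => ⟨(h1 e he).1, fun v hv => ?_⟩, h2⟩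
        exact Finset.mem_erase.2 ⟨fun hvi => h3 e he (hvi ▸ hv), (h1 e he).2 v hv⟩
      · rintro ⟨h1, h2⟩
        refine ⟨⟨fun e he => ⟨(h1 e he).1, fun v hv => Finset.mem_erase.1 ((h1 e he).2 v hv) |>.2⟩, h2⟩,
          fun e he hie => (Finset.mem_erase.1 ((h1 e he).2 i hie)).1 rfl⟩
    · intro M hM
      simp only [Finset.mem_filter] at hM
      have hMi : ∀ e ∈ M, i ∉ e := fun e he hie =>
        (Finset.mem_erase.1 ((hM.2.1 e he).2 i hie)).1 rfl
      have hfil : S.filter (fun v => ∀ e ∈ M, v ∉ e)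
          = insert i ((S.erase i).filter (fun v => ∀ e ∈ M, v ∉ e)) := by
        ext v
        simp only [Finset.mem_filter, Finset.mem_insert, Finset.mem_erase]
        constructor
        · rintro ⟨hvS, hv⟩
          by_cases hvi : v = i
          · exact Or.inl hvi
          · exact Or.inr ⟨⟨hvi, hvS⟩, hv⟩
        · rintro (rfl | ⟨⟨-, hvS⟩, hv⟩)
          · exact ⟨hi, hMi⟩
          · exact ⟨hvS, hv⟩
      rw [hfil, Finset.prod_insert (by simp), mul_assoc]
  · -- part B : matchings covering i
    have key_insert : ∀ j ∈ (S.erase i).filter (fun j => G.Adj i j),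
        ∀ M : Finset (Sym2 V), IsGMatching G ((S.erase i).erase j) M →
        IsGMatching G S (insert s(i, j) M) := by
      intro j hj M hM
      simp only [Finset.mem_filter, Finset.mem_erase] at hj
      obtain ⟨⟨hji, hjS⟩, hadj⟩ := hj
      have hmem : ∀ e ∈ M, ∀ v ∈ e, v ∈ S ∧ v ≠ i ∧ v ≠ j := by
        intro e he v hv
        have := (hM.1 e he).2 v hv
        simp only [Finset.mem_erase] at this
        exact ⟨this.2.2, this.2.1, this.1⟩
      constructor
      · intro e he
        rcases Finset.mem_insert.1 he with rfl | he
        · refine ⟨G.mem_edgeSet.2 hadj, fun v hv => ?_⟩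
          rcases Sym2.mem_iff.1 hv with rfl | rfl
          · exact hi
          · exact hjS
        · exact ⟨(hM.1 e he).1, fun v hv => (hmem e he v hv).1⟩
      · intro e he f hf hef v hv
        rcases Finset.mem_insert.1 he with rfl | he <;>
          rcases Finset.mem_insert.1 hf with rfl | hf
        · exact absurd rfl hef
        · intro hvf
          have hfm := hmem f hf v hvf
          rcases Sym2.mem_iff.1 hv with rfl | rfl
          · exact hfm.2.1 rfl
          · exact hfm.2.2 rfl
        · have := hmem e he v hv
          simp only [Sym2.mem_iff]
          push_neg
          exact ⟨this.2.1, this.2.2⟩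
        · exact hM.2 e he f hf hef v hv
    have hset : (univ.filter (fun M : Finset (Sym2 V) => IsGMatching G S M)).filter
          (fun M => ¬ ∀ e ∈ M, i ∉ e)
        = ((S.erase i).filter (fun j => G.Adj i j)).biUnion (fun j =>
            (univ.filter (fun M : Finset (Sym2 V) =>
              IsGMatching G ((S.erase i).erase j) M)).image (insert s(i, j))) := by
      ext M
      simp only [Finset.mem_filter, Finset.mem_biUnion, Finset.mem_image, Finset.mem_univ,
        true_and, Finset.mem_erase]
      constructor
      · rintro ⟨⟨hM1, hM2⟩, hcov⟩
        push_neg at hcov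
        obtain ⟨e, heM, hie⟩ := hcov
        induction e with
        | h a b =>
        have hij : ∃ j, s(a, b) = s(i, j) := by
          rcases Sym2.mem_iff.1 hie with rfl | rfl
          · exact ⟨b, rfl⟩
          · exact ⟨a, Sym2.eq_swap⟩
        obtain ⟨j, hj⟩ := hij
        rw [hj] at heM hie
        have hadj : G.Adj i j := G.mem_edgeSet.1 (hM1 _ heM).1
        have hjS : j ∈ S := (hM1 _ heM).2 j (Sym2.mem_mk_right i j)
        refine ⟨j, ⟨⟨hadj.ne', hjS⟩, hadj⟩, M.erase s(i, j), ?_, Finset.insert_erase heM⟩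
        constructor
        · intro f hf
          have hfM := Finset.mem_of_mem_erase hf
          have hfne := Finset.ne_of_mem_erase hf
          refine ⟨(hM1 f hfM).1, fun v hv => ?_⟩
          have hvS := (hM1 f hfM).2 v hv
          have hiv : i ∉ f := hM2 _ heM f hfM (Ne.symm hfne) i (Sym2.mem_mk_left i j)
          have hjv : j ∉ f := hM2 _ heM f hfM (Ne.symm hfne) j (Sym2.mem_mk_right i j)
          simp only [Finset.mem_erase]
          exact ⟨fun h => hjv (h ▸ hv), fun h => hiv (h ▸ hv), hvS⟩
        · intro e he f hf hef v hv
          exact hM2 e (Finset.mem_of_mem_erase he) f (Finset.mem_of_mem_erase hf) hef v hv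
      · rintro ⟨j, hj, M', hM', rfl⟩
        refine ⟨⟨?_, ?_⟩, ?_⟩
        · exact (key_insert j (by simpa [Finset.mem_filter, Finset.mem_erase] using hj) M' hM').1
        · exact (key_insert j (by simpa [Finset.mem_filter, Finset.mem_erase] using hj) M' hM').2
        · push_neg
          exact ⟨s(i, j), Finset.mem_insert_self _ _, Sym2.mem_mk_left i j⟩
    rw [hset, Finset.sum_biUnion]
    · apply Finset.sum_congr rfl
      intro j hj
      have hji : j ≠ i := (Finset.mem_erase.1 (Finset.mem_filter.1 hj).1).1
      have hnm : ∀ M ∈ univ.filter (fun M : Finset (Sym2 V) =>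
          IsGMatching G ((S.erase i).erase j) M), s(i, j) ∉ M := by
        intro M hM hmem
        have := ((Finset.mem_filter.1 hM).2.1 _ hmem).2 i (Sym2.mem_mk_left i j)
        simp [Finset.mem_erase] at this
      rw [Finset.sum_image (fun M₁ h₁ M₂ h₂ heq => by
        rw [← Finset.erase_insert (hnm M₁ h₁), heq, Finset.erase_insert (hnm M₂ h₂)])]
      rw [Finset.mul_sum]
      apply Finset.sum_congr rfl
      intro M hM
      have hfil : S.filter (fun v => ∀ e ∈ insert s(i, j) M, v ∉ e)
          = ((S.erase i).erase j).filter (fun v => ∀ e ∈ M, v ∉ e) := by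
        ext v
        simp only [Finset.mem_filter, Finset.mem_erase, Finset.mem_insert, Sym2.mem_iff]
        constructor
        · rintro ⟨hvS, hv⟩
          have hvij := hv s(i, j) (Or.inl rfl)
          simp only [Sym2.mem_iff] at hvij
          push_neg at hvij
          exact ⟨⟨hvij.2, hvij.1, hvS⟩, fun e he => hv e (Or.inr he)⟩
        · rintro ⟨⟨hvj, hvi, hvS⟩, hv⟩
          refine ⟨hvS, fun e he => ?_⟩
          rcases he with rfl | he
          · simp only [Sym2.mem_iff]; push_neg; exact ⟨hvi, hvj⟩
          · exact hv e he
      rw [hfil, Finset.prod_insert (hnm M hM)]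
      ring
    · -- pairwise disjoint
      intro j₁ hj₁ j₂ hj₂ hne
      simp only [Finset.coe_filter, Set.mem_setOf_eq, Finset.mem_coe] at hj₁ hj₂
      apply Finset.disjoint_left.2
      intro M hM₁ hM₂
      simp only [Finset.mem_image, Finset.mem_filter, Finset.mem_univ, true_and] at hM₁ hM₂
      obtain ⟨M₁, hM₁', rfl⟩ := hM₁
      obtain ⟨M₂, hM₂', hMeq⟩ := hM₂
      have hj₁' : j₁ ∈ (S.erase i).filter (fun j => G.Adj i j) := by
        simpa [Finset.mem_filter, Finset.mem_erase] using hj₁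
      have hmatch := key_insert j₁ hj₁' M₁ hM₁'
      have h1 : s(i, j₁) ∈ insert s(i, j₁) M₁ := Finset.mem_insert_self _ _
      have h2 : s(i, j₂) ∈ insert s(i, j₁) M₁ := by
        rw [← hMeq]; exact Finset.mem_insert_self _ _
      have heq : s(i, j₁) = s(i, j₂) := by
        by_contra hne'
        exact hmatch.2 _ h1 _ h2 hne' i (Sym2.mem_mk_left i j₁) (Sym2.mem_mk_left i j₂)
      rw [Sym2.eq_iff] at heq
      rcases heq with ⟨-, h⟩ | ⟨h, h'⟩
      · exact hne h
      · exact (Finset.mem_erase.1 (Finset.mem_filter.1 hj₁').1).1 h'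

lemma muG_split (G : SimpleGraph V) (w : Sym2 V → ℝ) (x : V → ℂ)
    {A B : Finset V} (hAB : Disjoint A B)
    (hcross : ∀ a ∈ A, ∀ b ∈ B, ¬ G.Adj a b) :
    muG G w x (A ∪ B) = muG G w x A * muG G w x B := by
  classical
  unfold muG
  rw [Finset.sum_mul_sum, ← Finset.sum_product']
  -- bijection : M ↦ (M.filter (⊆ A), M.filter (⊆ B))
  have hwhole : ∀ M : Finset (Sym2 V), IsGMatching G (A ∪ B) M → ∀ e ∈ M,
      (∀ v ∈ e, v ∈ A) ∨ (∀ v ∈ e, v ∈ B) := by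
    intro M hM e he
    induction e with
    | h a b =>
    have hadj : G.Adj a b := G.mem_edgeSet.1 (hM.1 _ he).1
    have ha := (hM.1 _ he).2 a (Sym2.mem_mk_left a b)
    have hb := (hM.1 _ he).2 b (Sym2.mem_mk_right a b)
    rw [Finset.mem_union] at ha hb
    rcases ha with ha | ha <;> rcases hb with hb | hb
    · left; intro v hv; rcases Sym2.mem_iff.1 hv with rfl | rfl <;> assumption
    · exact absurd hadj (hcross a ha b hb)
    · exact absurd hadj.symm (hcross b hb a ha)
    · right; intro v hv; rcases Sym2.mem_iff.1 hv with rfl | rfl <;> assumption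
  have hnotboth : ∀ e : Sym2 V, e ∈ G.edgeSet → (∀ v ∈ e, v ∈ A) → (∀ v ∈ e, v ∈ B) → False := by
    intro e heG hA hB
    induction e with
    | h a b =>
    exact Finset.disjoint_left.1 hAB (hA a (Sym2.mem_mk_left a b)) (hB a (Sym2.mem_mk_left a b))
  symm
  apply Finset.sum_bij' (i := fun (p : Finset (Sym2 V) × Finset (Sym2 V)) _ => p.1 ∪ p.2)
    (j := fun M _ => (M.filter (fun e => ∀ v ∈ e, v ∈ A), M.filter (fun e => ∀ v ∈ e, v ∈ B)))
  · -- membership forward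
    rintro ⟨MA, MB⟩ hp
    simp only [Finset.mem_product, Finset.mem_filter, Finset.mem_univ, true_and] at hp
    obtain ⟨hMA, hMB⟩ := hp
    simp only [Finset.mem_filter, Finset.mem_univ, true_and]
    have hvA : ∀ e ∈ MA, ∀ v ∈ e, v ∈ A := fun e he => (hMA.1 e he).2
    have hvB : ∀ e ∈ MB, ∀ v ∈ e, v ∈ B := fun e he => (hMB.1 e he).2
    constructor
    · intro e he
      rcases Finset.mem_union.1 he with he | he
      · exact ⟨(hMA.1 e he).1, fun v hv => Finset.mem_union_left _ (hvA e he v hv)⟩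
      · exact ⟨(hMB.1 e he).1, fun v hv => Finset.mem_union_right _ (hvB e he v hv)⟩
    · intro e he f hf hef v hv
      rcases Finset.mem_union.1 he with he | he <;> rcases Finset.mem_union.1 hf with hf | hf
      · exact hMA.2 e he f hf hef v hv
      · intro hvf
        exact Finset.disjoint_left.1 hAB (hvA e he v hv) (hvB f hf v hvf)
      · intro hvf
        exact Finset.disjoint_left.1 hAB (hvA f hf v hvf) (hvB e he v hv)
      · exact hMB.2 e he f hf hef v hv
  · -- membership backward
    intro M hM
    simp only [Finset.mem_filter, Finset.mem_univ, true_and] at hM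
    simp only [Finset.mem_product, Finset.mem_filter, Finset.mem_univ, true_and]
    constructor
    · exact ⟨fun e he => ⟨(hM.1 e (Finset.mem_of_mem_filter e he)).1,
        (Finset.mem_filter.1 he).2⟩,
        fun e he f hf => hM.2 e (Finset.mem_of_mem_filter e he) f (Finset.mem_of_mem_filter f hf)⟩
    · exact ⟨fun e he => ⟨(hM.1 e (Finset.mem_of_mem_filter e he)).1,
        (Finset.mem_filter.1 he).2⟩,
        fun e he f hf => hM.2 e (Finset.mem_of_mem_filter e he) f (Finset.mem_of_mem_filter f hf)⟩
  · -- left inverse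
    rintro ⟨MA, MB⟩ hp
    simp only [Finset.mem_product, Finset.mem_filter, Finset.mem_univ, true_and] at hp
    obtain ⟨hMA, hMB⟩ := hp
    have h1 : (MA ∪ MB).filter (fun e => ∀ v ∈ e, v ∈ A) = MA := by
      ext e
      simp only [Finset.mem_filter, Finset.mem_union]
      constructor
      · rintro ⟨he | he, hA⟩
        · exact he
        · exact absurd hA (fun hA => hnotboth e (hMB.1 e he).1 hA (hMB.1 e he).2)
      · intro he; exact ⟨Or.inl he, (hMA.1 e he).2⟩
    have h2 : (MA ∪ MB).filter (fun e => ∀ v ∈ e, v ∈ B) = MB := by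
      ext e
      simp only [Finset.mem_filter, Finset.mem_union]
      constructor
      · rintro ⟨he | he, hB⟩
        · exact absurd hB (fun hB => hnotboth e (hMA.1 e he).1 (hMA.1 e he).2 hB)
        · exact he
      · intro he; exact ⟨Or.inr he, (hMB.1 e he).2⟩
    simp [h1, h2]
  · -- right inverse
    intro M hM
    simp only [Finset.mem_filter, Finset.mem_univ, true_and] at hM
    ext e
    simp only [Finset.mem_union, Finset.mem_filter]
    constructor
    · rintro (⟨he, -⟩ | ⟨he, -⟩) <;> exact he
    · intro he
      rcases hwhole M hM e he with h | h
      · exact Or.inl ⟨he, h⟩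
      · exact Or.inr ⟨he, h⟩
  · -- values
    rintro ⟨MA, MB⟩ hp
    simp only [Finset.mem_product, Finset.mem_filter, Finset.mem_univ, true_and] at hp
    obtain ⟨hMA, hMB⟩ := hp
    have hMdisj : Disjoint MA MB := by
      rw [Finset.disjoint_left]
      intro e heA heB
      exact hnotboth e (hMA.1 e heA).1 (hMA.1 e heA).2 (hMB.1 e heB).2
    have huncov : (A ∪ B).filter (fun v => ∀ e ∈ MA ∪ MB, v ∉ e)
        = A.filter (fun v => ∀ e ∈ MA, v ∉ e) ∪ B.filter (fun v => ∀ e ∈ MB, v ∉ e) := by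
      ext v
      simp only [Finset.mem_filter, Finset.mem_union]
      constructor
      · rintro ⟨hv | hv, hunc⟩
        · exact Or.inl ⟨hv, fun e he => hunc e (Or.inl he)⟩
        · exact Or.inr ⟨hv, fun e he => hunc e (Or.inr he)⟩
      · rintro (⟨hv, hunc⟩ | ⟨hv, hunc⟩)
        · refine ⟨Or.inl hv, fun e he => ?_⟩
          rcases he with he | he
          · exact hunc e he
          · intro hve
            exact Finset.disjoint_left.1 hAB hv ((hMB.1 e he).2 v hve)
        · refine ⟨Or.inr hv, fun e he => ?_⟩
          rcases he with he | he
          · intro hve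
            exact Finset.disjoint_left.1 hAB ((hMA.1 e he).2 v hve) hv
          · exact hunc e he
    have hfdisj : Disjoint (A.filter (fun v => ∀ e ∈ MA, v ∉ e))
        (B.filter (fun v => ∀ e ∈ MB, v ∉ e)) :=
      Finset.disjoint_filter_filter hAB
    rw [huncov, Finset.prod_union hfdisj, Finset.prod_union hMdisj]
    ring

lemma muG_biUnion (G : SimpleGraph V) (w : Sym2 V → ℝ) (x : V → ℂ)
    {ι : Type} [DecidableEq ι] (t : Finset ι) (parts : ι → Finset V)
    (hdisj : ∀ j ∈ t, ∀ k ∈ t, j ≠ k → Disjoint (parts j) (parts k))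
    (hcross : ∀ j ∈ t, ∀ k ∈ t, j ≠ k →
      ∀ a ∈ parts j, ∀ b ∈ parts k, ¬ G.Adj a b) :
    muG G w x (t.biUnion parts) = ∏ j ∈ t, muG G w x (parts j) := by
  classical
  induction t using Finset.induction_on with
  | empty => simp [muG_empty]
  | insert _ _ hj ih =>
    rename_i a s
    rw [Finset.biUnion_insert, Finset.prod_insert hj]
    have hd : Disjoint (parts a) (s.biUnion parts) := by
      rw [Finset.disjoint_biUnion_right]
      intro k hk
      exact hdisj a (Finset.mem_insert_self a s) k (Finset.mem_insert_of_mem hk)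
        (fun h => hj (h ▸ hk))
    rw [muG_split G w x hd]
    · rw [ih (fun j hjs k hks => hdisj j (Finset.mem_insert_of_mem hjs) k
          (Finset.mem_insert_of_mem hks))
        (fun j hjs k hks => hcross j (Finset.mem_insert_of_mem hjs) k
          (Finset.mem_insert_of_mem hks))]
    · intro u hu v hv
      rw [Finset.mem_biUnion] at hv
      obtain ⟨k, hk, hv⟩ := hv
      exact hcross a (Finset.mem_insert_self a s) k (Finset.mem_insert_of_mem hk)
        (fun h => hj (h ▸ hk)) u hu v hv

lemma muG_transfer {V₁ V₂ : Type} [Fintype V₁] [DecidableEq V₁]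
    [Fintype V₂] [DecidableEq V₂]
    (G₁ : SimpleGraph V₁) (G₂ : SimpleGraph V₂)
    (w₁ : Sym2 V₁ → ℝ) (w₂ : Sym2 V₂ → ℝ) (x₁ : V₁ → ℂ) (x₂ : V₂ → ℂ)
    (f : V₁ → V₂) (hf : Function.Injective f) (S₁ : Finset V₁)
    (hadj : ∀ u ∈ S₁, ∀ v ∈ S₁, (G₂.Adj (f u) (f v) ↔ G₁.Adj u v))
    (hw : ∀ u ∈ S₁, ∀ v ∈ S₁, G₁.Adj u v → w₂ s(f u, f v) = w₁ s(u, v))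
    (hx : ∀ u ∈ S₁, x₂ (f u) = x₁ u) :
    muG G₂ w₂ x₂ (S₁.image f) = muG G₁ w₁ x₁ S₁ := by
  classical
  have hmem_map : ∀ (e : Sym2 V₁) (a : V₁), a ∈ e → f a ∈ Sym2.map f e := by
    intro e a ha
    rw [Sym2.mem_map]
    exact ⟨a, ha, rfl⟩
  have hmem_map' : ∀ (e : Sym2 V₁) (a : V₁), f a ∈ Sym2.map f e → a ∈ e := by
    intro e a ha
    rw [Sym2.mem_map] at ha
    obtain ⟨b, hb, hba⟩ := ha
    exact (hf hba) ▸ hb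
  symm
  unfold muG
  apply Finset.sum_bij (i := fun (M : Finset (Sym2 V₁)) _ => M.image (Sym2.map f))
  · -- maps matchings to matchings
    intro M hM
    simp only [Finset.mem_filter, Finset.mem_univ, true_and] at hM ⊢
    constructor
    · intro e₂ he₂
      rw [Finset.mem_image] at he₂
      obtain ⟨e, he, rfl⟩ := he₂
      have hvS : ∀ v ∈ e, v ∈ S₁ := (hM.1 e he).2
      constructor
      · induction e with
        | h a b =>
        have hadj' : G₁.Adj a b := G₁.mem_edgeSet.1 (hM.1 _ he).1
        exact G₂.mem_edgeSet.2 ((hadj a (hvS a (Sym2.mem_mk_left a b))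
          b (hvS b (Sym2.mem_mk_right a b))).2 hadj')
      · intro v hv
        rw [Sym2.mem_map] at hv
        obtain ⟨a, ha, rfl⟩ := hv
        exact Finset.mem_image_of_mem f (hvS a ha)
    · intro e₂ he₂ f₂ hf₂ hne v hv hvf
      rw [Finset.mem_image] at he₂ hf₂
      obtain ⟨e, he, rfl⟩ := he₂
      obtain ⟨e', he', rfl⟩ := hf₂
      rw [Sym2.mem_map] at hv
      obtain ⟨a, ha, rfl⟩ := hv
      have hne' : e ≠ e' := fun h => hne (h ▸ rfl)
      exact hM.2 e he e' he' hne' a ha (hmem_map' e' a hvf)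
  · -- injective
    intro M₁ h₁ M₂ h₂ heq
    exact Finset.image_injective (Sym2.map.injective hf) heq
  · -- surjective
    intro M₂ hM₂
    simp only [Finset.mem_filter, Finset.mem_univ, true_and] at hM₂
    have hlift : ∀ e₂ ∈ M₂, ∃ e : Sym2 V₁, (∀ v ∈ e, v ∈ S₁) ∧ Sym2.map f e = e₂ := by
      intro e₂ he₂
      induction e₂ with
      | h u v =>
      have hu := (hM₂.1 _ he₂).2 u (Sym2.mem_mk_left u v)
      have hv := (hM₂.1 _ he₂).2 v (Sym2.mem_mk_right u v)
      rw [Finset.mem_image] at hu hv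
      obtain ⟨a, ha, rfl⟩ := hu
      obtain ⟨b, hb, rfl⟩ := hv
      refine ⟨s(a, b), fun c hc => ?_, Sym2.map_pair_eq f a b⟩
      rcases Sym2.mem_iff.1 hc with rfl | rfl <;> assumption
    set M₁ := univ.filter (fun e : Sym2 V₁ => (∀ v ∈ e, v ∈ S₁) ∧ Sym2.map f e ∈ M₂) with hM₁def
    have himg : M₁.image (Sym2.map f) = M₂ := by
      ext e₂
      rw [Finset.mem_image]
      constructor
      · rintro ⟨e, he, rfl⟩
        exact (Finset.mem_filter.1 he).2.2
      · intro he₂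
        obtain ⟨e, heS, heq⟩ := hlift e₂ he₂
        exact ⟨e, Finset.mem_filter.2 ⟨Finset.mem_univ _, heS, heq ▸ he₂⟩, heq⟩
    refine ⟨M₁, ?_, himg⟩
    simp only [Finset.mem_filter, Finset.mem_univ, true_and]
    constructor
    · intro e he
      rw [hM₁def, Finset.mem_filter] at he
      obtain ⟨-, heS, heM₂⟩ := he
      refine ⟨?_, heS⟩
      induction e with
      | h a b =>
      have : G₂.Adj (f a) (f b) := by
        have := (hM₂.1 _ heM₂).1
        rwa [Sym2.map_pair_eq, G₂.mem_edgeSet] at this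
      exact G₁.mem_edgeSet.2 ((hadj a (heS a (Sym2.mem_mk_left a b))
        b (heS b (Sym2.mem_mk_right a b))).1 this)
    · intro e he e' he' hne v hv hvf
      rw [hM₁def, Finset.mem_filter] at he he'
      have hnemap : Sym2.map f e ≠ Sym2.map f e' :=
        fun h => hne (Sym2.map.injective hf h)
      exact hM₂.2 _ he.2.2 _ he'.2.2 hnemap (f v) (hmem_map e v hv) (hmem_map e' v hvf)
  · -- values agree
    intro M hM
    simp only [Finset.mem_filter, Finset.mem_univ, true_and] at hM
    have hsets : (S₁.image f).filter (fun v => ∀ e ∈ M.image (Sym2.map f), v ∉ e)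
        = (S₁.filter (fun v => ∀ e ∈ M, v ∉ e)).image f := by
      ext v₂
      simp only [Finset.mem_filter, Finset.mem_image]
      constructor
      · rintro ⟨hv₂, hunc⟩
        obtain ⟨a, ha, rfl⟩ := hv₂
        refine ⟨a, ⟨ha, fun e he hae => ?_⟩, rfl⟩
        exact hunc (Sym2.map f e) ⟨e, he, rfl⟩ (hmem_map e a hae)
      · rintro ⟨a, ha, rfl⟩
        refine ⟨⟨a, ha.1, rfl⟩, fun e₂ he₂ hae₂ => ?_⟩
        obtain ⟨e, he, rfl⟩ := he₂
        exact ha.2 e he (hmem_map' e a hae₂)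
    rw [hsets, Finset.prod_image (fun a _ b _ h => hf h),
      Finset.prod_image (fun e _ e' _ h => Sym2.map.injective hf h)]
    congr 1
    · exact Finset.prod_congr rfl (fun a ha => (hx a (Finset.mem_of_mem_filter a ha)).symm)
    · apply Finset.prod_congr rfl
      intro e he
      congr 1
      induction e with
      | h a b =>
      have haS := (hM.1 _ he).2 a (Sym2.mem_mk_left a b)
      have hbS := (hM.1 _ he).2 b (Sym2.mem_mk_right a b)
      have hadj' : G₁.Adj a b := G₁.mem_edgeSet.1 (hM.1 _ he).1
      rw [Sym2.map_pair_eq]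
      exact (hw a haS b hbS hadj').symm

/-! ### The vertex-deleted graph -/

def delv {V : Type} (G : SimpleGraph V) (i : V) : SimpleGraph V where
  Adj u v := G.Adj u v ∧ u ≠ i ∧ v ≠ i
  symm := ⟨fun u v ⟨h, hu, hv⟩ => ⟨h.symm, hv, hu⟩⟩
  loopless := ⟨fun v ⟨h, _, _⟩ => G.loopless.irrefl v h⟩

instance {V : Type} (G : SimpleGraph V) [DecidableRel G.Adj] [DecidableEq V] (i : V) :
    DecidableRel (delv G i).Adj :=
  fun u v => inferInstanceAs (Decidable (G.Adj u v ∧ u ≠ i ∧ v ≠ i))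

lemma delv_le {V : Type} (G : SimpleGraph V) (i : V) : delv G i ≤ G :=
  fun _ _ h => h.1

lemma delv_support_ne {V : Type} {G : SimpleGraph V} {i j v : V}
    (p : (delv G i).Walk j v) : ∀ u ∈ p.support, u = j ∨ u ≠ i := by
  induction p with
  | nil => intro u hu; rw [SimpleGraph.Walk.support_nil, List.mem_singleton] at hu; exact Or.inl hu
  | cons h q ih =>
    intro u hu
    rw [SimpleGraph.Walk.support_cons, List.mem_cons] at hu
    rcases hu with rfl | hu
    · exact Or.inl rfl
    · rcases ih u hu with rfl | hne
      · exact Or.inr h.2.2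
      · exact Or.inr hne

lemma delv_support_ne' {V : Type} {G : SimpleGraph V} {i j v : V}
    (hj : j ≠ i) (p : (delv G i).Walk j v) : ∀ u ∈ p.support, u ≠ i := by
  intro u hu
  rcases delv_support_ne p u hu with rfl | h
  · exact hj
  · exact h

lemma delv_end_ne {V : Type} {G : SimpleGraph V} {i j v : V}
    (hj : j ≠ i) (p : (delv G i).Walk j v) : v ≠ i :=
  delv_support_ne' hj p v (SimpleGraph.Walk.end_mem_support p)

/-! ### Walk lemmas -/

lemma transfer_concat {V : Type} {G H : SimpleGraph V} {u v z : V}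
    (p : G.Walk u v) (h : G.Adj v z) (hp hp')
    (h' : H.Adj v z) :
    (p.concat h).transfer H hp = (p.transfer H hp').concat h' := by
  induction p with
  | nil => simp [SimpleGraph.Walk.concat_nil, SimpleGraph.Walk.transfer]
  | cons hadj q ih =>
    simp only [SimpleGraph.Walk.concat_cons, SimpleGraph.Walk.transfer,
      SimpleGraph.Walk.cons.injEq, heq_eq_eq, true_and]
    exact congrArg (SimpleGraph.Walk.cons _) (ih _ _ _ _)

lemma getVert_one_concat {V : Type} {G : SimpleGraph V} {u v z : V}
    (p : G.Walk u v) (h : G.Adj v z) (hp : ¬ p.Nil) :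
    (p.concat h).getVert 1 = p.getVert 1 := by
  cases p with
  | nil => simp at hp
  | cons h' q =>
    rw [SimpleGraph.Walk.concat_cons, SimpleGraph.Walk.getVert_cons_succ,
      SimpleGraph.Walk.getVert_cons_succ, SimpleGraph.Walk.getVert_zero,
      SimpleGraph.Walk.getVert_zero]

/-- The rooted tree of paths `T^i_G` of the graph `G` at the root `i`: its
vertices are the paths of `G` starting at `i` (including the trivial path),
two paths being adjacent exactly when one is obtained from the other by
appending one edge. -/
def treeOfPaths {V : Type} (G : SimpleGraph V) (i : V) :
    SimpleGraph (Σ v : V, G.Path i v) :=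
  SimpleGraph.fromRel (fun P Q =>
    ∃ h : G.Adj P.1 Q.1, Q.2.val = (P.2.val).concat h)


section TreeStruct

variable {V : Type} [Fintype V] [DecidableEq V] (G : SimpleGraph V) [DecidableRel G.Adj] (i : V)

def rootP : Σ v : V, G.Path i v := ⟨i, SimpleGraph.Path.nil⟩

variable {G i}

lemma sp_ext {v : V} {p q : G.Path i v} (h : p.val = q.val) :
    (⟨v, p⟩ : Σ v : V, G.Path i v) = ⟨v, q⟩ :=
  congrArg (Sigma.mk v) (Subtype.ext h)

lemma tp_adj {P Q : Σ v : V, G.Path i v} :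
    (treeOfPaths G i).Adj P Q ↔ P ≠ Q ∧
      ((∃ h : G.Adj P.1 Q.1, Q.2.val = P.2.val.concat h) ∨
       (∃ h : G.Adj Q.1 P.1, P.2.val = Q.2.val.concat h)) :=
  SimpleGraph.fromRel_adj _ P Q

lemma ne_root_iff_notNil {P : Σ v : V, G.Path i v} :
    P ≠ rootP G i ↔ ¬ P.2.val.Nil := by
  constructor
  · intro hP hnil
    apply hP
    obtain ⟨v, p⟩ := P
    have hlen : p.val.length = 0 := SimpleGraph.Walk.nil_iff_length_eq.1 hnil
    have hvi : i = v := p.val.eq_of_length_eq_zero hlen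
    subst hvi
    have := SimpleGraph.Path.loop_eq p
    subst this
    rfl
  · rintro hnil rfl
    exact hnil .nil

def fstep (P : Σ v : V, G.Path i v) : V := P.2.val.getVert 1

lemma fstep_root : fstep (rootP G i) = i := rfl

lemma adj_fstep {P : Σ v : V, G.Path i v} (hP : P ≠ rootP G i) :
    G.Adj i (fstep P) :=
  SimpleGraph.Walk.adj_snd (ne_root_iff_notNil.1 hP)

lemma fstep_eq_of_adj {P Q : Σ v : V, G.Path i v}
    (h : (treeOfPaths G i).Adj P Q) (hP : P ≠ rootP G i) (hQ : Q ≠ rootP G i) :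
    fstep P = fstep Q := by
  rcases (tp_adj.1 h).2 with ⟨ha, heq⟩ | ⟨ha, heq⟩
  · unfold fstep
    rw [heq, getVert_one_concat _ _ (ne_root_iff_notNil.1 hP)]
  · unfold fstep
    rw [heq, getVert_one_concat _ _ (ne_root_iff_notNil.1 hQ)]

lemma adj_root_iff {Q : Σ v : V, G.Path i v} :
    (treeOfPaths G i).Adj (rootP G i) Q ↔
      ∃ h : G.Adj i Q.1, Q.2.val = SimpleGraph.Walk.cons h SimpleGraph.Walk.nil := by
  rw [tp_adj]
  constructor
  · rintro ⟨hne, ⟨h, heq⟩ | ⟨h, heq⟩⟩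
    · exact ⟨h, by rw [heq]; rfl⟩
    · exact absurd heq.symm (SimpleGraph.Walk.concat_ne_nil _ h)
  · rintro ⟨h, heq⟩
    refine ⟨?_, Or.inl ⟨h, by rw [heq]; rfl⟩⟩
    intro he
    cases he
    exact G.loopless.irrefl i h

end TreeStruct

/-! ### Lifting paths of the deleted graph -/

lemma transfer_congr {V : Type} {G H : SimpleGraph V} {u v : V}
    {p q : G.Walk u v} (h : p = q) (hp hq) :
    p.transfer H hp = q.transfer H hq := by subst h; rfl

lemma transfer_injective {V : Type} {G H : SimpleGraph V} {u v : V}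
    (p : G.Walk u v) : ∀ (q : G.Walk u v) (hp hq),
    p.transfer H hp = q.transfer H hq → p = q := by
  induction p with
  | nil =>
    intro q hp hq h
    cases q with
    | nil => rfl
    | cons hb s => simp [SimpleGraph.Walk.transfer] at h
  | cons ha t ih =>
    intro q hp hq h
    cases q with
    | nil => simp [SimpleGraph.Walk.transfer] at h; exact absurd h SimpleGraph.Walk.not_nil_cons
    | cons hb s =>
      simp only [SimpleGraph.Walk.transfer, SimpleGraph.Walk.cons.injEq] at h
      obtain ⟨hv2, hq2⟩ := SimpleGraph.Walk.cons.inj h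
      subst hv2
      have hts : t = s := ih s _ _ (eq_of_heq hq2)
      subst hts
      rfl

section LiftPath

variable {V : Type} [Fintype V] [DecidableEq V] {G : SimpleGraph V} [DecidableRel G.Adj]
  {i j : V} (hij : G.Adj i j)

lemma delv_edges_sub {v : V} (q : (delv G i).Walk j v) :
    ∀ e ∈ q.edges, e ∈ G.edgeSet :=
  fun _ he => SimpleGraph.edgeSet_mono (delv_le G i) (q.edges_subset_edgeSet he)

def liftPath (Q : Σ v : V, (delv G i).Path j v) : Σ v : V, G.Path i v :=
  ⟨Q.1, ⟨SimpleGraph.Walk.cons hij (Q.2.val.transfer G (delv_edges_sub Q.2.val)), by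
    rw [SimpleGraph.Walk.cons_isPath_iff]
    refine ⟨Q.2.prop.transfer _, ?_⟩
    rw [SimpleGraph.Walk.support_transfer]
    intro hmem
    exact delv_support_ne' hij.ne' Q.2.val i hmem rfl⟩⟩

lemma liftPath_fst (Q : Σ v : V, (delv G i).Path j v) : (liftPath hij Q).1 = Q.1 := rfl

lemma liftPath_val (Q : Σ v : V, (delv G i).Path j v) :
    (liftPath hij Q).2.val
      = SimpleGraph.Walk.cons hij (Q.2.val.transfer G (delv_edges_sub Q.2.val)) := rfl

lemma liftPath_inj : Function.Injective (liftPath hij) := by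
  rintro ⟨v, p⟩ ⟨v', p'⟩ h
  have hv : v = v' := congrArg Sigma.fst h
  subst hv
  apply sp_ext
  have h2 : (⟨v, (liftPath hij ⟨v, p⟩).2⟩ : Σ u : V, G.Path i u)
      = ⟨v, (liftPath hij ⟨v, p'⟩).2⟩ := h
  have h5 : (liftPath hij ⟨v, p⟩).2 = (liftPath hij ⟨v, p'⟩).2 := eq_of_heq (Sigma.ext_iff.1 h2).2
  have hval : SimpleGraph.Walk.cons hij (p.val.transfer G (delv_edges_sub p.val))
      = SimpleGraph.Walk.cons hij (p'.val.transfer G (delv_edges_sub p'.val)) :=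
    congrArg Subtype.val h5
  rw [SimpleGraph.Walk.cons.injEq] at hval
  exact transfer_injective _ _ _ _ (eq_of_heq hval.2)

lemma fstep_liftPath (Q : Σ v : V, (delv G i).Path j v) : fstep (liftPath hij Q) = j := by
  show (SimpleGraph.Walk.cons hij (Q.2.val.transfer G (delv_edges_sub Q.2.val))).getVert 1 = j
  rw [SimpleGraph.Walk.getVert_cons_succ, SimpleGraph.Walk.getVert_zero]

lemma liftPath_ne_root (Q : Σ v : V, (delv G i).Path j v) :
    liftPath hij Q ≠ rootP G i := by
  intro h
  have := fstep_liftPath hij Q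
  rw [h, fstep_root] at this
  exact hij.ne this

lemma liftPath_image :
    Finset.univ.image (liftPath hij) =
      Finset.univ.filter (fun P : Σ v : V, G.Path i v => fstep P = j) := by
  ext P
  simp only [Finset.mem_image, Finset.mem_filter, Finset.mem_univ, true_and]
  constructor
  · rintro ⟨Q, -, rfl⟩
    exact fstep_liftPath hij Q
  · intro hP
    have hPr : P ≠ rootP G i := by
      intro h
      rw [h, fstep_root] at hP
      exact hij.ne hP
    have hnil := ne_root_iff_notNil.1 hPr
    obtain ⟨v, p⟩ := P
    rw [SimpleGraph.Walk.not_nil_iff] at hnil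
    obtain ⟨u, h, q, heq⟩ := hnil
    have hu : u = j := by
      have h6 : fstep (⟨v, p⟩ : Σ v : V, G.Path i v) = u := by
        unfold fstep
        rw [heq, SimpleGraph.Walk.getVert_cons_succ, SimpleGraph.Walk.getVert_zero]
      rw [← h6, hP]
    subst hu
    have hpath : q.IsPath ∧ i ∉ q.support := by
      have h7 := p.prop
      rw [heq, SimpleGraph.Walk.cons_isPath_iff] at h7
      exact h7
    have hq : ∀ e ∈ q.edges, e ∈ (delv G i).edgeSet := by
      intro e he
      induction e with
      | h a b =>
      have ha : a ∈ q.support := q.fst_mem_support_of_mem_edges he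
      have hb : b ∈ q.support := q.snd_mem_support_of_mem_edges he
      rw [SimpleGraph.mem_edgeSet]
      exact ⟨G.mem_edgeSet.1 (q.edges_subset_edgeSet he),
        fun h' => hpath.2 (h' ▸ ha), fun h' => hpath.2 (h' ▸ hb)⟩
    refine ⟨⟨v, ⟨q.transfer (delv G i) hq, hpath.1.transfer _⟩⟩, ?_⟩
    apply sp_ext
    show SimpleGraph.Walk.cons hij (((q.transfer (delv G i) hq)).transfer G _) = p.val
    rw [SimpleGraph.Walk.transfer_transfer, SimpleGraph.Walk.transfer_self, heq]

lemma liftPath_adj (Q Q' : Σ v : V, (delv G i).Path j v) :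
    (treeOfPaths G i).Adj (liftPath hij Q) (liftPath hij Q') ↔
      (treeOfPaths (delv G i) j).Adj Q Q' := by
  have hQ1 : Q.1 ≠ i := delv_end_ne hij.ne' Q.2.val
  have hQ'1 : Q'.1 ≠ i := delv_end_ne hij.ne' Q'.2.val
  rw [tp_adj, tp_adj]
  constructor
  · rintro ⟨hne, ⟨h, heq⟩ | ⟨h, heq⟩⟩
    · refine ⟨fun h' => hne (h' ▸ rfl), Or.inl ?_⟩
      have heq' : SimpleGraph.Walk.cons hij (Q'.2.val.transfer G (delv_edges_sub Q'.2.val))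
          = SimpleGraph.Walk.cons hij
              ((Q.2.val.transfer G (delv_edges_sub Q.2.val)).concat h) := heq
      replace heq' := SimpleGraph.Walk.cons.inj heq'
      have heq2 := eq_of_heq heq'.2
      refine ⟨⟨h, hQ1, hQ'1⟩, ?_⟩
      apply transfer_injective (H := G) _ _ (delv_edges_sub Q'.2.val)
        (delv_edges_sub (Q.2.val.concat ⟨h, hQ1, hQ'1⟩))
      exact heq2.trans (transfer_concat _ _ _ (delv_edges_sub Q.2.val) h).symm
    · refine ⟨fun h' => hne (h' ▸ rfl), Or.inr ?_⟩
      have heq' : SimpleGraph.Walk.cons hij (Q.2.val.transfer G (delv_edges_sub Q.2.val))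
          = SimpleGraph.Walk.cons hij
              ((Q'.2.val.transfer G (delv_edges_sub Q'.2.val)).concat h) := heq
      replace heq' := SimpleGraph.Walk.cons.inj heq'
      have heq2 := eq_of_heq heq'.2
      refine ⟨⟨h, hQ'1, hQ1⟩, ?_⟩
      apply transfer_injective (H := G) _ _ (delv_edges_sub Q.2.val)
        (delv_edges_sub (Q'.2.val.concat ⟨h, hQ'1, hQ1⟩))
      exact heq2.trans (transfer_concat _ _ _ (delv_edges_sub Q'.2.val) h).symm
  · rintro ⟨hne, ⟨h, heq⟩ | ⟨h, heq⟩⟩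
    · refine ⟨fun h' => hne (liftPath_inj hij h'), Or.inl ⟨h.1, ?_⟩⟩
      show SimpleGraph.Walk.cons hij (Q'.2.val.transfer G (delv_edges_sub Q'.2.val))
          = (SimpleGraph.Walk.cons hij (Q.2.val.transfer G (delv_edges_sub Q.2.val))).concat h.1
      rw [SimpleGraph.Walk.concat_cons]
      have h8 : Q'.2.val.transfer G (delv_edges_sub Q'.2.val)
          = (Q.2.val.transfer G (delv_edges_sub Q.2.val)).concat h.1 :=
        (transfer_congr heq _ (delv_edges_sub (Q.2.val.concat h))).trans
          (transfer_concat _ _ _ (delv_edges_sub Q.2.val) h.1)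
      rw [h8]
    · refine ⟨fun h' => hne (liftPath_inj hij h'), Or.inr ⟨h.1, ?_⟩⟩
      show SimpleGraph.Walk.cons hij (Q.2.val.transfer G (delv_edges_sub Q.2.val))
          = (SimpleGraph.Walk.cons hij (Q'.2.val.transfer G (delv_edges_sub Q'.2.val))).concat h.1
      rw [SimpleGraph.Walk.concat_cons]
      have h8 : Q.2.val.transfer G (delv_edges_sub Q.2.val)
          = (Q'.2.val.transfer G (delv_edges_sub Q'.2.val)).concat h.1 :=
        (transfer_congr heq _ (delv_edges_sub (Q'.2.val.concat h))).trans
          (transfer_concat _ _ _ (delv_edges_sub Q'.2.val) h.1)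
      rw [h8]

end LiftPath

/-! ### The canonical one-edge path -/

noncomputable def cP {V : Type} (G : SimpleGraph V) (i j : V) : Σ v : V, G.Path i v :=
  if h : G.Adj i j then
    ⟨j, ⟨SimpleGraph.Walk.cons h SimpleGraph.Walk.nil, by
      rw [SimpleGraph.Walk.cons_isPath_iff]
      exact ⟨SimpleGraph.Walk.IsPath.nil, by simp [h.ne]⟩⟩⟩
  else rootP G i

lemma cP_fst' : True := trivial

lemma neighbor_eq_cP {V : Type} [Fintype V] [DecidableEq V] {G : SimpleGraph V}
    [DecidableRel G.Adj] {i : V} {Q : Σ v : V, G.Path i v}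
    (h : (treeOfPaths G i).Adj (rootP G i) Q) : Q = cP G i Q.1 := by
  obtain ⟨ha, hval⟩ := adj_root_iff.1 h
  obtain ⟨v, p⟩ := Q
  simp only [cP, dif_pos ha]
  exact sp_ext hval

lemma cP_eq_lift {V : Type} [Fintype V] [DecidableEq V] {G : SimpleGraph V}
    [DecidableRel G.Adj] {i j : V} (hij : G.Adj i j) :
    cP G i j = liftPath hij (rootP (delv G i) j) := by
  simp only [cP, dif_pos hij]
  rfl

lemma cP_fst {V : Type} [Fintype V] [DecidableEq V] {G : SimpleGraph V}
    [DecidableRel G.Adj] {i j : V} (hij : G.Adj i j) :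
    (cP G i j).1 = j := by
  rw [cP_eq_lift hij]
  rfl

lemma fstep_cP {V : Type} [Fintype V] [DecidableEq V] {G : SimpleGraph V}
    [DecidableRel G.Adj] {i j : V} (hij : G.Adj i j) :
    fstep (cP G i j) = j := by
  rw [cP_eq_lift hij]
  exact fstep_liftPath hij _

/-! ### Main induction -/

set_option maxHeartbeats 1000000 in
theorem godsil_key {V : Type} [Fintype V] [DecidableEq V] :
    ∀ (n : ℕ) (G : SimpleGraph V) [DecidableRel G.Adj], G.edgeFinset.card ≤ n →
    ∀ (w : Sym2 V → ℝ) (x : V → ℂ) (i : V),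
    muG G w x Finset.univ *
      muG (treeOfPaths G i)
        (Sym2.lift ⟨fun P Q => w s(P.1, Q.1), fun P Q => by simp [Sym2.eq_swap]⟩)
        (fun P => x P.1)
        (Finset.univ \ {⟨i, SimpleGraph.Path.nil⟩}) =
    muG (treeOfPaths G i)
        (Sym2.lift ⟨fun P Q => w s(P.1, Q.1), fun P Q => by simp [Sym2.eq_swap]⟩)
        (fun P => x P.1)
        Finset.univ *
      muG G w x (Finset.univ \ {i}) := by
  intro n
  induction n using Nat.strong_induction_on with
  | _ n ihn =>
  intro G instG hcard w x i
  set T := treeOfPaths G i with hT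
  set wT : Sym2 (Σ v : V, G.Path i v) → ℝ :=
    Sym2.lift ⟨fun P Q => w s(P.1, Q.1), fun P Q => by simp [Sym2.eq_swap]⟩ with hwT
  set xT : (Σ v : V, G.Path i v) → ℂ := fun P => x P.1 with hxT
  have hroot : (⟨i, SimpleGraph.Path.nil⟩ : Σ v : V, G.Path i v) = rootP G i := rfl
  rw [hroot, Finset.sdiff_singleton_eq_erase, Finset.sdiff_singleton_eq_erase]
  set r := rootP G i with hr
  set N := (Finset.univ.erase i).filter (fun j => G.Adj i j) with hN
  set Tpart : V → Finset (Σ v : V, G.Path i v) :=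
    fun j => Finset.univ.filter (fun P => fstep P = j) with hTpart
  have hmemN : ∀ j ∈ N, G.Adj i j := by
    intro j hj
    exact (Finset.mem_filter.1 hj).2
  -- G-side recursion
  have hGrec := muG_rec G w x (Finset.mem_univ i)
  -- T-side recursion
  have hTrec := muG_rec T wT xT (Finset.mem_univ r)
  have hxTr : xT r = x i := rfl
  -- reindex the T-side sum
  have hTsum : ∑ Q ∈ (Finset.univ.erase r).filter (fun Q => T.Adj r Q),
        (wT s(r, Q) : ℂ) * muG T wT xT ((Finset.univ.erase r).erase Q)
      = ∑ j ∈ N, (w s(i, j) : ℂ) * muG T wT xT ((Finset.univ.erase r).erase (cP G i j)) := by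
    apply Finset.sum_bij (i := fun Q _ => Q.1)
    · intro Q hQ
      have hadj : T.Adj r Q := (Finset.mem_filter.1 hQ).2
      obtain ⟨h, -⟩ := adj_root_iff.1 hadj
      exact Finset.mem_filter.2 ⟨Finset.mem_erase.2 ⟨h.ne', Finset.mem_univ _⟩, h⟩
    · intro Q hQ Q' hQ' heq
      have h1 := neighbor_eq_cP (Finset.mem_filter.1 hQ).2
      have h2 := neighbor_eq_cP (Finset.mem_filter.1 hQ').2
      rw [h1, h2, heq]
    · intro j hj
      have hij := hmemN j hj
      refine ⟨cP G i j, Finset.mem_filter.2 ⟨Finset.mem_erase.2 ⟨?_, Finset.mem_univ _⟩, ?_⟩, ?_⟩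
      · intro h
        have := fstep_cP hij
        rw [h, fstep_root] at this
        exact hij.ne this
      · rw [adj_root_iff, cP_eq_lift hij]
        exact ⟨hij, rfl⟩
      · exact cP_fst hij
    · intro Q hQ
      have hadj : T.Adj r Q := (Finset.mem_filter.1 hQ).2
      have hQc := neighbor_eq_cP hadj
      obtain ⟨h, hval⟩ := adj_root_iff.1 hadj
      have hwval : wT s(r, Q) = w s(i, Q.1) := rfl
      rw [hwval, ← hQc]
  -- partition of univ.erase r
  have hne_root_of_mem : ∀ (j : V), j ≠ i → ∀ P : Σ v : V, G.Path i v,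
      fstep P = j → P ≠ r := by
    intro j hji P hP h
    rw [h, fstep_root] at hP
    exact hji hP.symm
  have hpartition : Finset.univ.erase r = N.biUnion Tpart := by
    ext P
    simp only [Finset.mem_erase, Finset.mem_univ, and_true, Finset.mem_biUnion]
    constructor
    · intro hP
      exact ⟨fstep P, Finset.mem_filter.2 ⟨Finset.mem_erase.2
          ⟨(adj_fstep hP).ne', Finset.mem_univ _⟩, adj_fstep hP⟩,
        Finset.mem_filter.2 ⟨Finset.mem_univ _, rfl⟩⟩
    · rintro ⟨j, hj, hPj⟩
      exact hne_root_of_mem j (Finset.mem_erase.1 (Finset.mem_filter.1 hj).1).1 P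
        (Finset.mem_filter.1 hPj).2
  have hdisjparts : ∀ j ∈ N, ∀ k ∈ N, j ≠ k → Disjoint (Tpart j) (Tpart k) := by
    intro j _ k _ hjk
    rw [Finset.disjoint_left]
    intro P hPj hPk
    rw [Finset.mem_filter] at hPj hPk
    exact hjk (hPj.2 ▸ hPk.2)
  have hcrossparts : ∀ j ∈ N, ∀ k ∈ N, j ≠ k →
      ∀ P ∈ Tpart j, ∀ P' ∈ Tpart k, ¬ T.Adj P P' := by
    intro j hj k hk hjk P hP P' hP' hadj
    rw [Finset.mem_filter] at hP hP'
    have hPr : P ≠ r := hne_root_of_mem j (Finset.mem_erase.1 (Finset.mem_filter.1 hj).1).1 P hP.2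
    have hP'r : P' ≠ r :=
      hne_root_of_mem k (Finset.mem_erase.1 (Finset.mem_filter.1 hk).1).1 P' hP'.2
    exact hjk ((hP.2 ▸ hP'.2 ▸ fstep_eq_of_adj hadj hPr hP'r : j = k))
  have hforest : muG T wT xT (Finset.univ.erase r) = ∏ j ∈ N, muG T wT xT (Tpart j) := by
    rw [hpartition]
    exact muG_biUnion T wT xT N Tpart hdisjparts hcrossparts
  -- per-neighbor factorization
  have hforest_j : ∀ j ∈ N, muG T wT xT ((Finset.univ.erase r).erase (cP G i j))
      = muG T wT xT ((Tpart j).erase (cP G i j)) * ∏ k ∈ N.erase j, muG T wT xT (Tpart k) := by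
    intro j hj
    have hij := hmemN j hj
    set parts' : V → Finset (Σ v : V, G.Path i v) :=
      fun k => if k = j then (Tpart j).erase (cP G i j) else Tpart k with hparts'
    have hsub : ∀ k, parts' k ⊆ Tpart k := by
      intro k
      simp only [hparts']
      by_cases hkj : k = j
      · rw [if_pos hkj, hkj]
        exact Finset.erase_subset _ _
      · rw [if_neg hkj]
    have hseteq : (Finset.univ.erase r).erase (cP G i j) = N.biUnion parts' := by
      ext P
      simp only [Finset.mem_erase, Finset.mem_univ, and_true, Finset.mem_biUnion]
      constructor
      · rintro ⟨hPc, hPr⟩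
        refine ⟨fstep P, Finset.mem_filter.2 ⟨Finset.mem_erase.2
          ⟨(adj_fstep hPr).ne', Finset.mem_univ _⟩, adj_fstep hPr⟩, ?_⟩
        by_cases hkj : fstep P = j
        · have hpe : parts' (fstep P) = (Tpart j).erase (cP G i j) := by
            simp only [hparts']
            rw [if_pos hkj]
          rw [hpe]
          exact Finset.mem_erase.2 ⟨hPc, Finset.mem_filter.2 ⟨Finset.mem_univ _, hkj⟩⟩
        · have hpe : parts' (fstep P) = Tpart (fstep P) := by
            simp only [hparts']
            rw [if_neg hkj]
          rw [hpe]
          exact Finset.mem_filter.2 ⟨Finset.mem_univ _, rfl⟩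
      · rintro ⟨k, hk, hP⟩
        have hPk : P ∈ Tpart k := hsub k hP
        have hkN := hk
        have hki : k ≠ i := (Finset.mem_erase.1 (Finset.mem_filter.1 hkN).1).1
        have hfP : fstep P = k := (Finset.mem_filter.1 hPk).2
        refine ⟨?_, hne_root_of_mem k hki P hfP⟩
        by_cases hkj : k = j
        · subst hkj
          have hpe : parts' k = (Tpart k).erase (cP G i k) := by
            simp only [hparts']
            simp
          rw [hpe] at hP
          exact (Finset.mem_erase.1 hP).1
        · intro hPc
          apply hkj
          rw [← hfP, hPc, fstep_cP hij]
    rw [hseteq, muG_biUnion T wT xT N parts'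
      (fun a ha b hb hab => Finset.disjoint_of_subset_left (hsub a)
        (Finset.disjoint_of_subset_right (hsub b) (hdisjparts a ha b hb hab)))
      (fun a ha b hb hab P hP P' hP' => hcrossparts a ha b hb hab P (hsub a hP) P' (hsub b hP'))]
    rw [← Finset.mul_prod_erase N _ hj]
    congr 1
    · simp only [hparts']
      simp
    · apply Finset.prod_congr rfl
      intro k hk
      simp only [hparts']
      rw [if_neg (Finset.mem_erase.1 hk).1]
  -- the induction hypothesis, transferred
  have hIH : ∀ j ∈ N,
      muG G w x (Finset.univ.erase i) * muG T wT xT ((Tpart j).erase (cP G i j))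
      = muG T wT xT (Tpart j) * muG G w x ((Finset.univ.erase i).erase j) := by
    intro j hj
    have hij := hmemN j hj
    set D := delv G i with hD
    have hcard' : D.edgeFinset.card < n := by
      have hss : D.edgeFinset ⊂ G.edgeFinset := by
        rw [Finset.ssubset_iff_of_subset (SimpleGraph.edgeFinset_mono (delv_le G i))]
        refine ⟨s(i, j), SimpleGraph.mem_edgeFinset.2 hij, ?_⟩
        rw [SimpleGraph.mem_edgeFinset]
        intro hmem
        exact (D.mem_edgeSet.1 hmem).2.1 rfl
      exact lt_of_lt_of_le (Finset.card_lt_card hss) hcard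
    set x' : V → ℂ := Function.update x i 1 with hx'
    have IH := ihn D.edgeFinset.card hcard' D le_rfl w x' j
    rw [show (⟨j, SimpleGraph.Path.nil⟩ : Σ v : V, D.Path j v) = rootP D j from rfl,
      Finset.sdiff_singleton_eq_erase, Finset.sdiff_singleton_eq_erase] at IH
    -- identify the D-side quantities with G-side ones
    have hidtransfer : ∀ S : Finset V, (∀ v ∈ S, v ≠ i) →
        muG G w x S = muG D w x' S := by
      intro S hS
      have := muG_transfer D G w w x' x id Function.injective_id S
        (fun u hu v hv => ⟨fun h => ⟨h, hS u hu, hS v hv⟩, fun h => h.1⟩)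
        (fun u _ v _ _ => rfl)
        (fun u hu => (Function.update_of_ne (hS u hu) 1 x).symm)
      rwa [Finset.image_id] at this
    have hDi_empty : ∀ S : Finset V, (Finset.univ.erase i ∩ S).Nonempty →
        True := fun _ _ => trivial
    have c1 : muG D w x' Finset.univ = muG G w x (Finset.univ.erase i) := by
      rw [muG_rec D w x' (Finset.mem_univ i)]
      have hfe : (Finset.univ.erase i).filter (fun k => D.Adj i k) = ∅ := by
        apply Finset.filter_false_of_mem
        intro k _
        exact fun h => h.2.1 rfl
      have hx'i : x' i = 1 := Function.update_self i 1 x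
      rw [hfe, Finset.sum_empty, add_zero, hx'i, one_mul]
      exact (hidtransfer _ (fun v hv => (Finset.mem_erase.1 hv).1)).symm
    have c2 : muG D w x' (Finset.univ.erase j) = muG G w x ((Finset.univ.erase i).erase j) := by
      rw [muG_rec D w x' (Finset.mem_erase.2 ⟨hij.ne, Finset.mem_univ i⟩)]
      have hfe : ((Finset.univ.erase j).erase i).filter (fun k => D.Adj i k) = ∅ := by
        apply Finset.filter_false_of_mem
        intro k _
        exact fun h => h.2.1 rfl
      have hx'i : x' i = 1 := Function.update_self i 1 x
      rw [hfe, Finset.sum_empty, add_zero, hx'i, one_mul, Finset.erase_right_comm]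
      exact (hidtransfer _ (fun v hv => (Finset.mem_erase.1 (Finset.mem_erase.1 hv).2).1)).symm
    have hend_ne : ∀ u : Σ v : V, D.Path j v, u.1 ≠ i :=
      fun u => delv_end_ne hij.ne' u.2.val
    have c3 : muG (treeOfPaths D j)
        (Sym2.lift ⟨fun P Q => w s(P.1, Q.1), fun P Q => by simp [Sym2.eq_swap]⟩)
        (fun P => x' P.1) Finset.univ = muG T wT xT (Tpart j) := by
      have := muG_transfer (treeOfPaths D j) T
        (Sym2.lift ⟨fun P Q => w s(P.1, Q.1), fun P Q => by simp [Sym2.eq_swap]⟩) wT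
        (fun P => x' P.1) xT (liftPath hij) (liftPath_inj hij) Finset.univ
        (fun u _ v _ => liftPath_adj hij u v)
        (fun u _ v _ _ => rfl)
        (fun u _ => by
          show x ((liftPath hij u).1) = x' u.1
          rw [liftPath_fst, hx', Function.update_of_ne (hend_ne u) 1 x])
      rw [liftPath_image hij] at this
      rw [hTpart]
      exact this.symm
    have c4 : muG (treeOfPaths D j)
        (Sym2.lift ⟨fun P Q => w s(P.1, Q.1), fun P Q => by simp [Sym2.eq_swap]⟩)
        (fun P => x' P.1) (Finset.univ.erase (rootP D j))
        = muG T wT xT ((Tpart j).erase (cP G i j)) := by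
      have := muG_transfer (treeOfPaths D j) T
        (Sym2.lift ⟨fun P Q => w s(P.1, Q.1), fun P Q => by simp [Sym2.eq_swap]⟩) wT
        (fun P => x' P.1) xT (liftPath hij) (liftPath_inj hij)
        (Finset.univ.erase (rootP D j))
        (fun u _ v _ => liftPath_adj hij u v)
        (fun u _ v _ _ => rfl)
        (fun u _ => by
          show x ((liftPath hij u).1) = x' u.1
          rw [liftPath_fst, hx', Function.update_of_ne (hend_ne u) 1 x])
      rw [Finset.image_erase (liftPath_inj hij), liftPath_image hij, ← cP_eq_lift hij] at this
      rw [hTpart]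
      exact this.symm
    rw [c1, c2, c3, c4] at IH
    exact IH
  -- final algebra
  rw [hGrec, hforest]
  rw [hTrec, hxTr, hTsum, hforest]
  rw [add_mul, add_mul, Finset.sum_mul, Finset.sum_mul]
  congr 1
  · ring
  · apply Finset.sum_congr rfl
    intro j hj
    rw [hforest_j j hj]
    have hm : muG T wT xT (Tpart j) * ∏ k ∈ N.erase j, muG T wT xT (Tpart k)
        = ∏ k ∈ N, muG T wT xT (Tpart k) :=
      Finset.mul_prod_erase N (fun k => muG T wT xT (Tpart k)) hj
    have hIHj := hIH j hj
    calc (w s(i, j) : ℂ) * muG G w x ((Finset.univ.erase i).erase j)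
          * ∏ k ∈ N, muG T wT xT (Tpart k)
        = (w s(i, j) : ℂ) * ((muG T wT xT (Tpart j) * muG G w x ((Finset.univ.erase i).erase j))
            * ∏ k ∈ N.erase j, muG T wT xT (Tpart k)) := by rw [← hm]; ring
      _ = (w s(i, j) : ℂ) * ((muG G w x (Finset.univ.erase i)
            * muG T wT xT ((Tpart j).erase (cP G i j)))
            * ∏ k ∈ N.erase j, muG T wT xT (Tpart k)) := by rw [hIHj]
      _ = (w s(i, j) : ℂ) * (muG T wT xT ((Tpart j).erase (cP G i j))
            * ∏ k ∈ N.erase j, muG T wT xT (Tpart k)) * muG G w x (Finset.univ.erase i) := by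
          ring

/-- **Godsil's identity.** Let `G` be a finite simple graph with positive edge
weights `w` and complex vertex variables `x`, rooted at `i`. Let `T = T^i_G` be
its rooted tree of paths, with root `r` the trivial path at `i`, where a path
`P` carries the vertex variable of its last vertex and the edge between a path
and its one-edge extension carries the weight of the appended edge. Then
`μ(G) · μ(T ∖ r) = μ(T) · μ(G ∖ i)`. -/
theorem godsil_identity {V : Type} [Fintype V] [DecidableEq V]
    (G : SimpleGraph V) [DecidableRel G.Adj]
    (w : Sym2 V → ℝ) (hw : ∀ e ∈ G.edgeSet, 0 < w e)
    (x : V → ℂ) (i : V) :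
    muG G w x Finset.univ *
      muG (treeOfPaths G i)
        (Sym2.lift ⟨fun P Q => w s(P.1, Q.1), fun P Q => by simp [Sym2.eq_swap]⟩)
        (fun P => x P.1)
        (Finset.univ \ {⟨i, SimpleGraph.Path.nil⟩}) =
    muG (treeOfPaths G i)
        (Sym2.lift ⟨fun P Q => w s(P.1, Q.1), fun P Q => by simp [Sym2.eq_swap]⟩)
        (fun P => x P.1)
        Finset.univ *
      muG G w x (Finset.univ \ {i}) := by
  exact godsil_key G.edgeFinset.card G le_rfl w x i
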